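/- Let L, ŝ3 : ℝ → ℝ³ be differentiable, with ẑ a fixed unit vector, a(t) = R(α·ŝ3(t) − ẑ), and suppose L̇(t) = a(t) × F(t) for some F : ℝ → ℝ³ and ŝ3̇(t) = (1/I₁)(L(t) × ŝ3(t)). Then λ(t) = −⟨L(t), a(t)⟩ is constant. -/

import Mathlib

open Matrix

theorem jellett_vector_conserved
    (R α I₁ : ℝ) (hR : 0 < R) (hα : 0 < α) (hα1 : α < 1) (hI₁ : 0 < I₁)
    (zhat : Fin 3 → ℝ) (hz : zhat ⬝ᵥ zhat = 1)
    (L s3 F : ℝ → Fin 3 → ℝ)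
    (a : ℝ → Fin 3 → ℝ) (ha : ∀ t, a t = R • (α • s3 t - zhat))
    (hL : ∀ t, HasDerivAt L (crossProduct (a t) (F t)) t)
    (hs3 : ∀ t, HasDerivAt s3 ((1 / I₁) • crossProduct (L t) (s3 t)) t) :
    ∀ s t : ℝ, -(L s ⬝ᵥ a s) = -(L t ⬝ᵥ a t) := by
  have ha' : ∀ t, HasDerivAt a ((R * α) • ((1 / I₁) • crossProduct (L t) (s3 t))) t := by
    intro t
    have : HasDerivAt (fun t => R • (α • s3 t - zhat))
        (R • (α • ((1 / I₁) • crossProduct (L t) (s3 t)))) t :=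
      (((hs3 t).const_smul α).sub_const zhat).const_smul R
    have heq : (fun t : ℝ => R • (α • s3 t - zhat)) = a := by
      funext u; rw [ha u]
    rw [heq] at this
    simpa [smul_smul, mul_assoc] using this
  have key : ∀ t, HasDerivAt (fun u => -(L u ⬝ᵥ a u)) 0 t := by
    intro t
    have hdot : HasDerivAt (fun u => L u ⬝ᵥ a u)
        ((crossProduct (a t) (F t)) ⬝ᵥ a t
          + L t ⬝ᵥ ((R * α) • ((1 / I₁) • crossProduct (L t) (s3 t)))) t := by
      have hLc : ∀ i, HasDerivAt (fun u => L u i) ((crossProduct (a t) (F t)) i) t :=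
        fun i => (hasDerivAt_pi.mp (hL t)) i
      have hac : ∀ i, HasDerivAt (fun u => a u i)
          (((R * α) • ((1 / I₁) • crossProduct (L t) (s3 t))) i) t :=
        fun i => (hasDerivAt_pi.mp (ha' t)) i
      have : HasDerivAt (fun u => ∑ i, L u i * a u i)
          (∑ i, ((crossProduct (a t) (F t)) i * a t i
            + L t i * ((R * α) • ((1 / I₁) • crossProduct (L t) (s3 t))) i)) t :=
        HasDerivAt.fun_sum fun i _ => (hLc i).mul (hac i)
      simpa [dotProduct, Finset.sum_add_distrib] using this
    have h1 : (crossProduct (a t) (F t)) ⬝ᵥ a t = 0 := by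
      rw [dotProduct_comm]; exact dot_self_cross _ _
    have h2 : L t ⬝ᵥ ((R * α) • ((1 / I₁) • crossProduct (L t) (s3 t))) = 0 := by
      rw [dotProduct_smul, dotProduct_smul, dot_self_cross]
      simp
    rw [h1, h2, add_zero] at hdot
    simpa using hdot.fun_neg
  intro s t
  have := is_const_of_deriv_eq_zero (f := fun u => -(L u ⬝ᵥ a u))
    (fun u => (key u).differentiableAt) (fun u => (key u).deriv) s t
  exact this
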